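/- For all integers j, k ≥ 2, there exist g, h ∈ Lie(ℱ) such that tr A^j agrees with g and tr B^k agrees with h at every point of Ŝ_n. -/

import Mathlib

open MvPolynomial Matrix

/-- Polynomial functions on `M_n(ℂ) × M_n(ℂ)`, represented as polynomials in the
entries of the two matrices. -/
abbrev PolyFun (n : ℕ) := MvPolynomial ((Fin n × Fin n) ⊕ (Fin n × Fin n)) ℂ

/-- The matrix of coordinate functions `X_{jk}`. -/
noncomputable def Xmat (n : ℕ) : Matrix (Fin n) (Fin n) (PolyFun n) :=
  fun i j => MvPolynomial.X (Sum.inl (i, j))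

/-- The matrix of coordinate functions `Y_{jk}`. -/
noncomputable def Ymat (n : ℕ) : Matrix (Fin n) (Fin n) (PolyFun n) :=
  fun i j => MvPolynomial.X (Sum.inr (i, j))

/-- Traceless part `A = X - (tr X / n) I_n`. -/
noncomputable def Amat (n : ℕ) : Matrix (Fin n) (Fin n) (PolyFun n) :=
  Xmat n - (MvPolynomial.C ((n : ℂ)⁻¹) * Matrix.trace (Xmat n)) • (1 : Matrix (Fin n) (Fin n) (PolyFun n))

/-- Traceless part `B = Y - (tr Y / n) I_n`. -/
noncomputable def Bmat (n : ℕ) : Matrix (Fin n) (Fin n) (PolyFun n) :=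
  Ymat n - (MvPolynomial.C ((n : ℂ)⁻¹) * Matrix.trace (Ymat n)) • (1 : Matrix (Fin n) (Fin n) (PolyFun n))

/-- The polynomial function `(X,Y) ↦ tr (A^p B^q)`. -/
noncomputable def trAB (n p q : ℕ) : PolyFun n :=
  Matrix.trace (Amat n ^ p * Bmat n ^ q)

/-- The polynomial function `(X,Y) ↦ tr (X^a Y^b)`. -/
noncomputable def trXY (n a b : ℕ) : PolyFun n :=
  Matrix.trace (Xmat n ^ a * Ymat n ^ b)

/-- The Poisson bracket
`{F,G} = Σ_{j,k} ∂F/∂X_{jk} ∂G/∂Y_{kj} − ∂F/∂Y_{jk} ∂G/∂X_{kj}`. -/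
noncomputable def pbracket {n : ℕ} (F G : PolyFun n) : PolyFun n :=
  ∑ j : Fin n, ∑ k : Fin n,
    (MvPolynomial.pderiv (Sum.inl (j, k)) F * MvPolynomial.pderiv (Sum.inr (k, j)) G
      - MvPolynomial.pderiv (Sum.inr (j, k)) F * MvPolynomial.pderiv (Sum.inl (k, j)) G)

/-- Evaluation of a polynomial function at a pair of matrices. -/
noncomputable def evalP {n : ℕ} (X Y : Matrix (Fin n) (Fin n) ℂ) (F : PolyFun n) : ℂ :=
  MvPolynomial.eval (Sum.elim (fun p => X p.1 p.2) (fun p => Y p.1 p.2)) F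

/-- The Calogero–Moser variety `Ĉ_n = {(X,Y) : rank([X,Y] − i I_n) = 1}`. -/
def Chat (n : ℕ) : Set (Matrix (Fin n) (Fin n) ℂ × Matrix (Fin n) (Fin n) ℂ) :=
  {P | ((P.1 * P.2 - P.2 * P.1) - Complex.I • (1 : Matrix (Fin n) (Fin n) ℂ)).rank = 1}

/-- The traceless Calogero–Moser variety
`Ŝ_n = {(X,Y) : tr X = tr Y = 0, rank([X,Y] − i I_n) = 1}`. -/
def Shat (n : ℕ) : Set (Matrix (Fin n) (Fin n) ℂ × Matrix (Fin n) (Fin n) ℂ) :=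
  {P | Matrix.trace P.1 = 0 ∧ Matrix.trace P.2 = 0 ∧
    ((P.1 * P.2 - P.2 * P.1) - Complex.I • (1 : Matrix (Fin n) (Fin n) ℂ)).rank = 1}

/-- The set `ℱ = {tr A², tr B², tr A³, (tr AB)²}`. -/
noncomputable def calF (n : ℕ) : Set (PolyFun n) :=
  {trAB n 2 0, trAB n 0 2, trAB n 3 0, (trAB n 1 1) ^ 2}

/-- The smallest ℂ-linear subspace of the polynomial functions containing `S`
and closed under the Poisson bracket. -/
inductive LieGen (n : ℕ) (S : Set (PolyFun n)) : PolyFun n → Prop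
  | base {f : PolyFun n} : f ∈ S → LieGen n S f
  | zero : LieGen n S 0
  | add {f g : PolyFun n} : LieGen n S f → LieGen n S g → LieGen n S (f + g)
  | smul (c : ℂ) {f : PolyFun n} : LieGen n S f → LieGen n S (c • f)
  | bracket {f g : PolyFun n} : LieGen n S f → LieGen n S g → LieGen n S (pbracket f g)

section Infra
variable {n : ℕ}

/-- Gradient wrt X: `(gX F) k j = ∂F/∂X_{jk}`. -/
noncomputable def gX {n : ℕ} (F : PolyFun n) : Matrix (Fin n) (Fin n) (PolyFun n) :=
  fun k j => MvPolynomial.pderiv (Sum.inl (j, k)) F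

noncomputable def gY {n : ℕ} (F : PolyFun n) : Matrix (Fin n) (Fin n) (PolyFun n) :=
  fun k j => MvPolynomial.pderiv (Sum.inr (j, k)) F

lemma pbracket_eq (F G : PolyFun n) :
    pbracket F G = Matrix.trace (gX F * gY G) - Matrix.trace (gY F * gX G) := by
  simp only [pbracket, Matrix.trace, Matrix.diag, Matrix.mul_apply, gX, gY,
    ← Finset.sum_sub_distrib]
  rw [Finset.sum_comm]

lemma map_pderiv_mul (v : (Fin n × Fin n) ⊕ (Fin n × Fin n))
    (M N : Matrix (Fin n) (Fin n) (PolyFun n)) :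
    (M * N).map (pderiv v) = M.map (pderiv v) * N + M * N.map (pderiv v) := by
  ext a b
  simp only [Matrix.map_apply, Matrix.mul_apply, Matrix.add_apply, map_sum, pderiv_mul,
    ← Finset.sum_add_distrib]

lemma map_pderiv_one (v : (Fin n × Fin n) ⊕ (Fin n × Fin n)) :
    (1 : Matrix (Fin n) (Fin n) (PolyFun n)).map (pderiv v) = 0 := by
  ext a b
  by_cases h : a = b <;> simp [Matrix.one_apply, h]

lemma map_pderiv_pow (v : (Fin n × Fin n) ⊕ (Fin n × Fin n))
    (M : Matrix (Fin n) (Fin n) (PolyFun n)) (p : ℕ) :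
    (M ^ p).map (pderiv v) =
      ∑ i ∈ Finset.range p, M ^ i * M.map (pderiv v) * M ^ (p - 1 - i) := by
  induction p with
  | zero => simpa using map_pderiv_one v
  | succ p ih =>
    rw [pow_succ, map_pderiv_mul, ih, Finset.sum_range_succ, Finset.sum_mul]
    refine congrArg₂ (· + ·) ?_ ?_
    · refine Finset.sum_congr rfl fun i hi => ?_
      rw [Finset.mem_range] at hi
      rw [mul_assoc ((M:Matrix (Fin n) (Fin n) (PolyFun n)) ^ i * M.map (pderiv v)),
        ← pow_succ]
      have : p - 1 - i + 1 = p + 1 - 1 - i := by omega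
      rw [this]
    · simp

end Infra
section Infra2
variable {n : ℕ}

lemma trace_one' : Matrix.trace (1 : Matrix (Fin n) (Fin n) (PolyFun n)) = C (n : ℂ) := by
  rw [Matrix.trace_one, Fintype.card_fin]; rfl

lemma map_pderiv_smul_one (v : (Fin n × Fin n) ⊕ (Fin n × Fin n)) (c : PolyFun n) :
    ((c • (1 : Matrix (Fin n) (Fin n) (PolyFun n))).map (pderiv v)) =
      (pderiv v c) • (1 : Matrix (Fin n) (Fin n) (PolyFun n)) := by
  ext a b
  by_cases hab : a = b <;>
    simp [Matrix.map_apply, Matrix.smul_apply, Matrix.one_apply, hab, smul_eq_mul]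

lemma Xmat_map_inl (j k : Fin n) :
    (Xmat n).map (pderiv (Sum.inl (j, k))) = Matrix.single j k 1 := by
  ext a b
  simp only [Xmat, Matrix.map_apply, pderiv_X, Matrix.single, Matrix.of_apply,
    Pi.single_apply]
  by_cases h : (j, k) = (a, b)
  · rcases h with h; simp [Prod.ext_iff] at h; simp [h]
  · rw [if_neg (by simpa [eq_comm] using h)]
    have : ¬(j = a ∧ k = b) := by
      intro hh; exact h (by simp [Prod.ext_iff, hh.1, hh.2])
    rw [if_neg this]

lemma Xmat_map_inr (v : Fin n × Fin n) :
    (Xmat n).map (pderiv (Sum.inr v)) = 0 := by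
  ext a b; simp [Xmat, Matrix.map_apply, pderiv_X_of_ne]

lemma Ymat_map_inr (j k : Fin n) :
    (Ymat n).map (pderiv (Sum.inr (j, k))) = Matrix.single j k 1 := by
  ext a b
  simp only [Ymat, Matrix.map_apply, pderiv_X, Matrix.single, Matrix.of_apply,
    Pi.single_apply]
  by_cases h : (j, k) = (a, b)
  · rcases h with h; simp [Prod.ext_iff] at h; simp [h]
  · rw [if_neg (by simpa [eq_comm] using h)]
    have : ¬(j = a ∧ k = b) := by
      intro hh; exact h (by simp [Prod.ext_iff, hh.1, hh.2])
    rw [if_neg this]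

lemma Ymat_map_inl (v : Fin n × Fin n) :
    (Ymat n).map (pderiv (Sum.inl v)) = 0 := by
  ext a b; simp [Ymat, Matrix.map_apply, pderiv_X_of_ne]

lemma pderiv_trace_Xmat (j k : Fin n) :
    pderiv (Sum.inl (j, k)) (Matrix.trace (Xmat n)) = if j = k then 1 else 0 := by
  simp only [Matrix.trace, Matrix.diag, Xmat, map_sum, pderiv_X, Pi.single_apply]
  by_cases hjk : j = k
  · subst hjk
    rw [Finset.sum_eq_single j (fun b _ hb => by
        rw [if_neg (by simp [Prod.ext_iff]; intro h; exact hb h)])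
      (by simp), if_pos rfl, if_pos rfl]
  · rw [if_neg hjk]
    refine Finset.sum_eq_zero fun x _ => ?_
    rw [if_neg (by simp [Prod.ext_iff]; rintro rfl rfl; exact hjk rfl)]

lemma pderiv_trace_Xmat_inr (v : Fin n × Fin n) :
    pderiv (Sum.inr v) (Matrix.trace (Xmat n)) = 0 := by
  simp [Matrix.trace, Matrix.diag, Xmat, map_sum, pderiv_X_of_ne]

lemma pderiv_trace_Ymat (j k : Fin n) :
    pderiv (Sum.inr (j, k)) (Matrix.trace (Ymat n)) = if j = k then 1 else 0 := by
  simp only [Matrix.trace, Matrix.diag, Ymat, map_sum, pderiv_X, Pi.single_apply]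
  by_cases hjk : j = k
  · subst hjk
    rw [Finset.sum_eq_single j (fun b _ hb => by
        rw [if_neg (by simp [Prod.ext_iff]; intro h; exact hb h)])
      (by simp), if_pos rfl, if_pos rfl]
  · rw [if_neg hjk]
    refine Finset.sum_eq_zero fun x _ => ?_
    rw [if_neg (by simp [Prod.ext_iff]; rintro rfl rfl; exact hjk rfl)]

lemma pderiv_trace_Ymat_inl (v : Fin n × Fin n) :
    pderiv (Sum.inl v) (Matrix.trace (Ymat n)) = 0 := by
  simp [Matrix.trace, Matrix.diag, Ymat, map_sum, pderiv_X_of_ne]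

lemma Amat_map_inl (j k : Fin n) :
    (Amat n).map (pderiv (Sum.inl (j, k))) =
      Matrix.single j k 1
        - (if j = k then (C ((n:ℂ)⁻¹) : PolyFun n) else 0) • (1 : Matrix (Fin n) (Fin n) (PolyFun n)) := by
  have : (Amat n).map (pderiv (Sum.inl (j, k)))
      = (Xmat n).map (pderiv (Sum.inl (j, k)))
        - ((C ((n : ℂ)⁻¹) * Matrix.trace (Xmat n)) • (1 : Matrix (Fin n) (Fin n) (PolyFun n))).map
            (pderiv (Sum.inl (j, k))) := by
    ext a b; simp [Amat, Matrix.map_apply, Matrix.sub_apply]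
  rw [this, Xmat_map_inl, map_pderiv_smul_one, pderiv_C_mul, pderiv_trace_Xmat]
  congr 1
  by_cases hjk : j = k <;> simp [hjk]

lemma Amat_map_inr (v : Fin n × Fin n) :
    (Amat n).map (pderiv (Sum.inr v)) = 0 := by
  have : (Amat n).map (pderiv (Sum.inr v))
      = (Xmat n).map (pderiv (Sum.inr v))
        - ((C ((n : ℂ)⁻¹) * Matrix.trace (Xmat n)) • (1 : Matrix (Fin n) (Fin n) (PolyFun n))).map
            (pderiv (Sum.inr v)) := by
    ext a b; simp [Amat, Matrix.map_apply, Matrix.sub_apply]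
  rw [this, Xmat_map_inr, map_pderiv_smul_one, pderiv_C_mul, pderiv_trace_Xmat_inr]
  simp

lemma Bmat_map_inr (j k : Fin n) :
    (Bmat n).map (pderiv (Sum.inr (j, k))) =
      Matrix.single j k 1
        - (if j = k then (C ((n:ℂ)⁻¹) : PolyFun n) else 0) • (1 : Matrix (Fin n) (Fin n) (PolyFun n)) := by
  have : (Bmat n).map (pderiv (Sum.inr (j, k)))
      = (Ymat n).map (pderiv (Sum.inr (j, k)))
        - ((C ((n : ℂ)⁻¹) * Matrix.trace (Ymat n)) • (1 : Matrix (Fin n) (Fin n) (PolyFun n))).map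
            (pderiv (Sum.inr (j, k))) := by
    ext a b; simp [Bmat, Matrix.map_apply, Matrix.sub_apply]
  rw [this, Ymat_map_inr, map_pderiv_smul_one, pderiv_C_mul, pderiv_trace_Ymat]
  congr 1
  by_cases hjk : j = k <;> simp [hjk]

lemma Bmat_map_inl (v : Fin n × Fin n) :
    (Bmat n).map (pderiv (Sum.inl v)) = 0 := by
  have : (Bmat n).map (pderiv (Sum.inl v))
      = (Ymat n).map (pderiv (Sum.inl v))
        - ((C ((n : ℂ)⁻¹) * Matrix.trace (Ymat n)) • (1 : Matrix (Fin n) (Fin n) (PolyFun n))).map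
            (pderiv (Sum.inl v)) := by
    ext a b; simp [Bmat, Matrix.map_apply, Matrix.sub_apply]
  rw [this, Ymat_map_inl, map_pderiv_smul_one, pderiv_C_mul, pderiv_trace_Ymat_inl]
  simp

lemma pderiv_trace (v : (Fin n × Fin n) ⊕ (Fin n × Fin n))
    (M : Matrix (Fin n) (Fin n) (PolyFun n)) :
    pderiv v (Matrix.trace M) = Matrix.trace (M.map (pderiv v)) := by
  simp [Matrix.trace, Matrix.diag, Matrix.map_apply, map_sum]

lemma trace_stdBasisMatrix_mul (j k : Fin n) (M : Matrix (Fin n) (Fin n) (PolyFun n)) :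
    Matrix.trace (Matrix.single j k 1 * M) = M k j := by
  simp [Matrix.trace, Matrix.diag, Matrix.mul_apply, Matrix.single, ite_and,
    Matrix.of_apply, Finset.sum_ite_eq]

end Infra2
section Infra3
variable {n : ℕ}

local notation "A" => Amat n
local notation "B" => Bmat n

lemma trace_cyc (M N : Matrix (Fin n) (Fin n) (PolyFun n)) :
    Matrix.trace (M * N) = Matrix.trace (N * M) := Matrix.trace_mul_comm M N

lemma gX_trAB (p q : ℕ) :
    gX (trAB n p q) =
      (∑ i ∈ Finset.range p, A ^ (p - 1 - i) * B ^ q * A ^ i)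
        - ((p : PolyFun n) * C ((n:ℂ)⁻¹) * trAB n (p - 1) q) •
            (1 : Matrix (Fin n) (Fin n) (PolyFun n)) := by
  apply Matrix.ext
  intro k j
  show pderiv (Sum.inl (j, k)) (trAB n p q) = _
  rw [trAB, pderiv_trace, map_pderiv_mul, map_pderiv_pow, map_pderiv_pow, Bmat_map_inl]
  simp only [mul_zero, zero_mul, Matrix.mul_zero, Matrix.zero_mul,
    Finset.sum_const_zero, Matrix.mul_zero, add_zero, Amat_map_inl]
  rw [Finset.sum_mul, Matrix.trace_sum]
  have hterm : ∀ i ∈ Finset.range p,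
      (A ^ i * (Matrix.single j k 1
          - (if j = k then (C ((n:ℂ)⁻¹) : PolyFun n) else 0) • 1) * A ^ (p - 1 - i) * B ^ q).trace
        = (A ^ (p - 1 - i) * B ^ q * A ^ i) k j
            - (if j = k then (C ((n:ℂ)⁻¹) : PolyFun n) else 0) * trAB n (p - 1) q := by
    intro i hi
    rw [Finset.mem_range] at hi
    rw [mul_assoc, mul_assoc, trace_cyc, mul_assoc, sub_mul, Matrix.trace_sub,
      trace_stdBasisMatrix_mul, smul_mul_assoc, one_mul, Matrix.trace_smul, smul_eq_mul]
    have h1 : ((A ^ (p - 1 - i) * B ^ q) * A ^ i).trace = trAB n (p - 1) q := by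
      rw [trace_cyc, ← mul_assoc, ← pow_add]
      have h2 : i + (p - 1 - i) = p - 1 := by omega
      rw [h2, trAB]
    rw [h1]
  rw [Finset.sum_congr rfl hterm, Finset.sum_sub_distrib, Finset.sum_const, Finset.card_range]
  simp only [Matrix.sub_apply, Matrix.smul_apply, Matrix.one_apply, Matrix.sum_apply,
    smul_eq_mul]
  congr 1
  by_cases hjk : j = k
  · subst hjk
    simp [nsmul_eq_mul, mul_assoc]
  · rw [if_neg hjk, if_neg (fun h => hjk h.symm)]
    simp

end Infra3
section Infra4
variable {n : ℕ}

local notation "A" => Amat n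
local notation "B" => Bmat n

lemma gY_trAB (p q : ℕ) :
    gY (trAB n p q) =
      (∑ i ∈ Finset.range q, B ^ (q - 1 - i) * A ^ p * B ^ i)
        - ((q : PolyFun n) * C ((n:ℂ)⁻¹) * trAB n p (q - 1)) •
            (1 : Matrix (Fin n) (Fin n) (PolyFun n)) := by
  apply Matrix.ext
  intro k j
  show pderiv (Sum.inr (j, k)) (trAB n p q) = _
  rw [trAB, pderiv_trace, map_pderiv_mul, map_pderiv_pow, map_pderiv_pow, Amat_map_inr]
  simp only [mul_zero, zero_mul, Matrix.mul_zero, Matrix.zero_mul,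
    Finset.sum_const_zero, add_zero, zero_add, Bmat_map_inr]
  rw [Finset.mul_sum, Matrix.trace_sum]
  have hterm : ∀ i ∈ Finset.range q,
      (A ^ p * (B ^ i * (Matrix.single j k 1
          - (if j = k then (C ((n:ℂ)⁻¹) : PolyFun n) else 0) • 1) * B ^ (q - 1 - i))).trace
        = (B ^ (q - 1 - i) * A ^ p * B ^ i) k j
            - (if j = k then (C ((n:ℂ)⁻¹) : PolyFun n) else 0) * trAB n p (q - 1) := by
    intro i hi
    rw [Finset.mem_range] at hi
    rw [trace_cyc, mul_assoc, mul_assoc, trace_cyc, mul_assoc, sub_mul, Matrix.trace_sub,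
      trace_stdBasisMatrix_mul, smul_mul_assoc, one_mul, Matrix.trace_smul, smul_eq_mul]
    have h1 : ((B ^ (q - 1 - i) * A ^ p) * B ^ i).trace = trAB n p (q - 1) := by
      rw [mul_assoc, trace_cyc, mul_assoc, ← pow_add]
      have h2 : i + (q - 1 - i) = q - 1 := by omega
      rw [h2, trAB]
    rw [h1]
  rw [Finset.sum_congr rfl hterm, Finset.sum_sub_distrib, Finset.sum_const, Finset.card_range]
  simp only [Matrix.sub_apply, Matrix.smul_apply, Matrix.one_apply, Matrix.sum_apply,
    smul_eq_mul]
  congr 1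
  by_cases hjk : j = k
  · subst hjk
    simp [nsmul_eq_mul, mul_assoc]
  · rw [if_neg hjk, if_neg (fun h => hjk h.symm)]
    simp

end Infra4
section Infra5
variable {n : ℕ}

local notation "A" => Amat n
local notation "B" => Bmat n

lemma trace_Amat (hn : n ≠ 0) : Matrix.trace A = 0 := by
  have : (C ((n:ℂ)⁻¹) : PolyFun n) * C (n:ℂ) = 1 := by
    rw [← _root_.map_mul, inv_mul_cancel₀ (by exact_mod_cast hn), MvPolynomial.C_1]
  rw [Amat, Matrix.trace_sub, Matrix.trace_smul, trace_one', smul_eq_mul]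
  rw [mul_comm (C ((n:ℂ)⁻¹)) (Matrix.trace (Xmat n)), mul_assoc, this, mul_one, sub_self]

lemma trace_Bmat (hn : n ≠ 0) : Matrix.trace B = 0 := by
  have : (C ((n:ℂ)⁻¹) : PolyFun n) * C (n:ℂ) = 1 := by
    rw [← _root_.map_mul, inv_mul_cancel₀ (by exact_mod_cast hn), MvPolynomial.C_1]
  rw [Bmat, Matrix.trace_sub, Matrix.trace_smul, trace_one', smul_eq_mul]
  rw [mul_comm (C ((n:ℂ)⁻¹)) (Matrix.trace (Ymat n)), mul_assoc, this, mul_one, sub_self]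

lemma trAB_p0 (p : ℕ) : trAB n p 0 = Matrix.trace (A ^ p) := by
  rw [trAB, pow_zero, mul_one]

lemma trAB_0q (q : ℕ) : trAB n 0 q = Matrix.trace (B ^ q) := by
  rw [trAB, pow_zero, one_mul]

lemma trAB_10 (hn : n ≠ 0) : trAB n 1 0 = 0 := by
  rw [trAB_p0, pow_one, trace_Amat hn]

lemma trAB_01 (hn : n ≠ 0) : trAB n 0 1 = 0 := by
  rw [trAB_0q, pow_one, trace_Bmat hn]

lemma trace_factor (P Q : Matrix (Fin n) (Fin n) (PolyFun n)) (c d : PolyFun n) :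
    ((P - c • (1 : Matrix (Fin n) (Fin n) (PolyFun n))) *
      (Q - d • (1 : Matrix (Fin n) (Fin n) (PolyFun n)))).trace
      = (P * Q).trace - c * Q.trace - d * P.trace + C (n:ℂ) * (c * d) := by
  rw [sub_mul, mul_sub, mul_sub]
  simp only [Matrix.trace_sub, Matrix.trace_smul, smul_mul_assoc, mul_smul_comm,
    one_mul, mul_one, smul_smul, trace_one', smul_eq_mul]
  ring

end Infra5
section Infra6
variable {n : ℕ}

local notation "A" => Amat n
local notation "B" => Bmat n

lemma gY_p0 (p : ℕ) : gY (trAB n p 0) = 0 := by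
  rw [gY_trAB]; simp

lemma gX_0q (q : ℕ) : gX (trAB n 0 q) = 0 := by
  rw [gX_trAB]; simp

lemma pbracket_mul (F G H : PolyFun n) :
    pbracket (F * G) H = F * pbracket G H + G * pbracket F H := by
  simp only [pbracket, pderiv_mul, Finset.mul_sum, ← Finset.sum_add_distrib]
  refine Finset.sum_congr rfl fun j _ => Finset.sum_congr rfl fun k _ => by ring

lemma pbracket_XX (a b : ℕ) : pbracket (trAB n a 0) (trAB n b 0) = 0 := by
  rw [pbracket_eq, gY_p0, gY_p0]; simp

lemma pbracket_YY (a b : ℕ) : pbracket (trAB n 0 a) (trAB n 0 b) = 0 := by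
  rw [pbracket_eq, gX_0q, gX_0q]; simp

lemma sum_AA (p : ℕ) :
    (∑ i ∈ Finset.range (p+1), A ^ (p + 1 - 1 - i) * B ^ 0 * A ^ i)
      = ((p:PolyFun n) + 1) • A ^ p := by
  have h : ∀ i ∈ Finset.range (p+1), A ^ (p + 1 - 1 - i) * B ^ 0 * A ^ i = A ^ p := by
    intro i hi
    rw [Finset.mem_range] at hi
    rw [pow_zero, mul_one, ← pow_add]
    have h2 : p + 1 - 1 - i + i = p := by omega
    rw [h2]
  rw [Finset.sum_congr rfl h, Finset.sum_const, Finset.card_range,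
    ← Nat.cast_smul_eq_nsmul (PolyFun n) (p+1)]
  norm_cast

lemma sum_BB (q : ℕ) :
    (∑ i ∈ Finset.range (q+1), B ^ (q + 1 - 1 - i) * A ^ 0 * B ^ i)
      = ((q:PolyFun n) + 1) • B ^ q := by
  have h : ∀ i ∈ Finset.range (q+1), B ^ (q + 1 - 1 - i) * A ^ 0 * B ^ i = B ^ q := by
    intro i hi
    rw [Finset.mem_range] at hi
    rw [pow_zero, mul_one, ← pow_add]
    have h2 : q + 1 - 1 - i + i = q := by omega
    rw [h2]
  rw [Finset.sum_congr rfl h, Finset.sum_const, Finset.card_range,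
    ← Nat.cast_smul_eq_nsmul (PolyFun n) (q+1)]
  norm_cast

end Infra6
section Infra7
variable {n : ℕ}

local notation "A" => Amat n
local notation "B" => Bmat n

lemma E6 (hn : n ≠ 0) (p : ℕ) :
    pbracket (trAB n 1 1) (trAB n (p+1) 0)
      = -(((p:PolyFun n) + 1) * trAB n (p+1) 0) := by
  rw [pbracket_eq, gY_p0, Matrix.mul_zero, Matrix.trace_zero, zero_sub,
    gY_trAB 1 1, gX_trAB (p+1) 0, sum_AA]
  simp only [Finset.sum_range_one, pow_zero, one_mul, mul_one, pow_one]
  rw [trace_factor]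
  simp only [Nat.sub_self, Nat.sub_zero, Nat.add_sub_cancel, pow_zero, one_mul, mul_one,
    Matrix.trace_smul, ← pow_succ']
  rw [trace_Amat hn, trAB_10 hn, mul_smul_comm, Matrix.trace_smul, ← pow_succ', ← trAB_p0,
    smul_eq_mul, smul_eq_mul]
  push_cast
  ring

lemma E6' (hn : n ≠ 0) (q : ℕ) :
    pbracket (trAB n 1 1) (trAB n 0 (q+1))
      = ((q:PolyFun n) + 1) * trAB n 0 (q+1) := by
  rw [pbracket_eq, gX_0q, Matrix.mul_zero, Matrix.trace_zero, sub_zero,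
    gX_trAB 1 1, gY_trAB 0 (q+1), sum_BB]
  simp only [Finset.sum_range_one, pow_zero, one_mul, mul_one, pow_one]
  rw [trace_factor]
  simp only [Nat.sub_self, Nat.sub_zero, Nat.add_sub_cancel, pow_zero, one_mul, mul_one,
    Matrix.trace_smul, ← pow_succ']
  rw [trace_Bmat hn, trAB_01 hn, mul_smul_comm, Matrix.trace_smul, ← pow_succ', ← trAB_0q,
    smul_eq_mul, smul_eq_mul]
  push_cast
  ring

end Infra7
section Infra8
variable {n : ℕ}

local notation "A" => Amat n
local notation "B" => Bmat n
local notation "Id" => (1 : Matrix (Fin n) (Fin n) (PolyFun n))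

lemma trAB_p1 (p : ℕ) : trAB n p 1 = (A ^ p * B).trace := by rw [trAB, pow_one]
lemma trAB_1q (q : ℕ) : trAB n 1 q = (A * B ^ q).trace := by rw [trAB, pow_one]

lemma gXp1 (p : ℕ) : gX (trAB n (p+1) 0) =
    ((p:PolyFun n) + 1) • A ^ p - (((p:PolyFun n) + 1) * C ((n:ℂ)⁻¹) * trAB n p 0) • Id := by
  rw [gX_trAB, sum_AA]; push_cast; simp

lemma gY0q1 (q : ℕ) : gY (trAB n 0 (q+1)) =
    ((q:PolyFun n) + 1) • B ^ q - (((q:PolyFun n) + 1) * C ((n:ℂ)⁻¹) * trAB n 0 q) • Id := by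
  rw [gY_trAB, sum_BB]; push_cast; simp

lemma gYp1 (p : ℕ) : gY (trAB n p 1) =
    A ^ p - (C ((n:ℂ)⁻¹) * trAB n p 0) • Id := by
  rw [gY_trAB]; simp [Finset.sum_range_one]

lemma gX1q (q : ℕ) : gX (trAB n 1 q) =
    B ^ q - (C ((n:ℂ)⁻¹) * trAB n 0 q) • Id := by
  rw [gX_trAB]; simp [Finset.sum_range_one]

lemma gX30 : gX (trAB n 3 0) =
    (A^2 + (A^2 + A^2)) - ((3:PolyFun n) * C ((n:ℂ)⁻¹) * trAB n 2 0) • Id := by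
  have := gXp1 (n := n) 2
  norm_num at this ⊢
  rw [this]
  congr 1
  module

lemma gY03 : gY (trAB n 0 3) =
    (B^2 + (B^2 + B^2)) - ((3:PolyFun n) * C ((n:ℂ)⁻¹) * trAB n 0 2) • Id := by
  have := gY0q1 (n := n) 2
  norm_num at this ⊢
  rw [this]
  congr 1
  module

lemma gX21 : gX (trAB n 2 1) =
    (A * B + B * A) - ((2:PolyFun n) * C ((n:ℂ)⁻¹) * trAB n 1 1) • Id := by
  rw [gX_trAB]
  norm_num [Finset.sum_range_succ, Finset.sum_range_one, pow_one]

end Infra8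
section Infra9
variable {n : ℕ}

local notation "A" => Amat n
local notation "B" => Bmat n
local notation "Id" => (1 : Matrix (Fin n) (Fin n) (PolyFun n))

lemma gY02 : gY (trAB n 0 2) = (B + B) - ((2:PolyFun n) * C ((n:ℂ)⁻¹) * trAB n 0 1) • Id := by
  rw [gY_trAB]
  norm_num [Finset.sum_range_succ, Finset.sum_range_one]

lemma gX20 : gX (trAB n 2 0) = (A + A) - ((2:PolyFun n) * C ((n:ℂ)⁻¹) * trAB n 1 0) • Id := by
  rw [gX_trAB]
  norm_num [Finset.sum_range_succ, Finset.sum_range_one]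

lemma hC (hn : n ≠ 0) : (C ((n:ℂ)) : PolyFun n) * C ((n:ℂ)⁻¹) = 1 := by
  rw [← _root_.map_mul, mul_inv_cancel₀ (by exact_mod_cast hn), MvPolynomial.C_1]

lemma E1 (hn : n ≠ 0) :
    pbracket (trAB n 3 0) (trAB n 0 2) = 6 * trAB n 2 1 := by
  rw [pbracket_eq, gY_p0, Matrix.zero_mul, Matrix.trace_zero, sub_zero, gX30, gY02,
    trace_factor]
  simp only [mul_add, add_mul, Matrix.trace_add, trace_Bmat hn, trAB_01 hn, ← trAB_p1,
    smul_eq_mul]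
  ring

lemma E2 (hn : n ≠ 0) :
    pbracket (trAB n 2 1) (trAB n 0 2) = 4 * trAB n 1 2 := by
  rw [pbracket_eq, gX_0q, Matrix.mul_zero, Matrix.trace_zero, sub_zero, gX21, gY02,
    trace_factor]
  have h1 : ((B * A) * B).trace = (A * B^2).trace := by
    rw [trace_cyc, ← mul_assoc, trace_cyc (B*B), ← pow_two]
  have h2 : ((A * B) * B).trace = (A * B^2).trace := by
    rw [mul_assoc, ← pow_two]
  simp only [mul_add, add_mul, Matrix.trace_add, h1, h2, trace_Bmat hn, trAB_01 hn,
    ← trAB_1q, smul_eq_mul]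
  ring

lemma E3 (hn : n ≠ 0) :
    pbracket (trAB n 1 2) (trAB n 0 2) = 2 * trAB n 0 3 := by
  rw [pbracket_eq, gX_0q, Matrix.mul_zero, Matrix.trace_zero, sub_zero, gX1q, gY02,
    trace_factor]
  have h1 : (B ^ 2 * B).trace = (B ^ 3).trace := by rw [← pow_succ]
  simp only [mul_add, add_mul, Matrix.trace_add, h1, trace_Bmat hn, trAB_01 hn,
    ← trAB_0q, smul_eq_mul]
  ring

lemma E4 (hn : n ≠ 0) (p : ℕ) :
    pbracket (trAB n (p+1) 0) (trAB n 0 2) = 2 * ((p:PolyFun n) + 1) * trAB n p 1 := by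
  rw [pbracket_eq, gY_p0, Matrix.zero_mul, Matrix.trace_zero, sub_zero, gXp1, gY02,
    trace_factor]
  simp only [smul_mul_assoc, mul_add, Matrix.trace_add, Matrix.trace_smul,
    trace_Bmat hn, trAB_01 hn, ← trAB_p1, smul_eq_mul]
  ring

lemma E4' (hn : n ≠ 0) (q : ℕ) :
    pbracket (trAB n 0 (q+1)) (trAB n 2 0) = -(2 * ((q:PolyFun n) + 1) * trAB n 1 q) := by
  rw [pbracket_eq, gX_0q, Matrix.zero_mul, Matrix.trace_zero, zero_sub, gY0q1, gX20,
    trace_factor]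
  have h1 : (B ^ q * A).trace = (A * B ^ q).trace := trace_cyc _ _
  simp only [smul_mul_assoc, mul_add, Matrix.trace_add, Matrix.trace_smul, h1,
    trace_Amat hn, trAB_10 hn, ← trAB_1q, smul_eq_mul]
  ring

lemma E5 (hn : n ≠ 0) (p : ℕ) :
    pbracket (trAB n 3 0) (trAB n p 1)
      = 3 * trAB n (p+2) 0 - 3 * C ((n:ℂ)⁻¹) * (trAB n 2 0 * trAB n p 0) := by
  rw [pbracket_eq, gY_p0, Matrix.zero_mul, Matrix.trace_zero, sub_zero, gX30, gYp1,
    trace_factor]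
  have h1 : (A ^ 2 * A ^ p).trace = (A ^ (p+2)).trace := by
    rw [← pow_add, Nat.add_comm]
  simp only [mul_add, add_mul, Matrix.trace_add, h1, ← trAB_p0, smul_eq_mul]
  linear_combination (3 * C ((n:ℂ)⁻¹) * trAB n 2 0 * trAB n p 0) * hC hn

lemma E5' (hn : n ≠ 0) (q : ℕ) :
    pbracket (trAB n 1 q) (trAB n 0 3)
      = 3 * trAB n 0 (q+2) - 3 * C ((n:ℂ)⁻¹) * (trAB n 0 2 * trAB n 0 q) := by
  rw [pbracket_eq, gX_0q, Matrix.mul_zero, Matrix.trace_zero, sub_zero, gX1q, gY03,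
    trace_factor]
  have h1 : (B ^ q * B ^ 2).trace = (B ^ (q+2)).trace := by rw [← pow_add]
  simp only [mul_add, add_mul, Matrix.trace_add, h1, ← trAB_0q, smul_eq_mul]
  linear_combination (3 * C ((n:ℂ)⁻¹) * trAB n 0 2 * trAB n 0 q) * hC hn

end Infra9
section Memb
variable {n : ℕ}

lemma lie_of_bracket_eq {S : Set (PolyFun n)} {f g x : PolyFun n} (c : ℂ) (hc : c ≠ 0)
    (hf : LieGen n S f) (hg : LieGen n S g)
    (h : pbracket f g = C c * x) : LieGen n S x := by
  have hx : x = c⁻¹ • pbracket f g := by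
    rw [h, smul_eq_C_mul, ← mul_assoc, ← _root_.map_mul, inv_mul_cancel₀ hc,
      MvPolynomial.C_1, one_mul]
  rw [hx]
  exact LieGen.smul _ (LieGen.bracket hf hg)

lemma mem20 : LieGen n (calF n) (trAB n 2 0) := LieGen.base (by simp [calF])
lemma mem02 : LieGen n (calF n) (trAB n 0 2) := LieGen.base (by simp [calF])
lemma mem30 : LieGen n (calF n) (trAB n 3 0) := LieGen.base (by simp [calF])
lemma memT11sq : LieGen n (calF n) ((trAB n 1 1) ^ 2) := LieGen.base (by simp [calF])

lemma memT21 (hn : n ≠ 0) : LieGen n (calF n) (trAB n 2 1) := by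
  refine lie_of_bracket_eq 6 (by norm_num) mem30 mem02 ?_
  rw [E1 hn, show ((C (6:ℂ)) : PolyFun n) = 6 from map_ofNat _ 6]

lemma memT12 (hn : n ≠ 0) : LieGen n (calF n) (trAB n 1 2) := by
  refine lie_of_bracket_eq 4 (by norm_num) (memT21 hn) mem02 ?_
  rw [E2 hn, show ((C (4:ℂ)) : PolyFun n) = 4 from map_ofNat _ 4]

lemma mem03 (hn : n ≠ 0) : LieGen n (calF n) (trAB n 0 3) := by
  refine lie_of_bracket_eq 2 (by norm_num) (memT12 hn) mem02 ?_
  rw [E3 hn, show ((C (2:ℂ)) : PolyFun n) = 2 from map_ofNat _ 2]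

lemma memTp1 (hn : n ≠ 0) (p : ℕ) (h : LieGen n (calF n) (trAB n (p+1) 0)) :
    LieGen n (calF n) (trAB n p 1) := by
  refine lie_of_bracket_eq (2*((p:ℂ)+1)) (mul_ne_zero two_ne_zero (Nat.cast_add_one_ne_zero p)) h mem02 ?_
  rw [E4 hn p]
  simp only [map_add, _root_.map_mul, map_neg, map_sub, map_ofNat, _root_.map_one,
    MvPolynomial.C_eq_coe_nat]
  try push_cast
  try ring

lemma memT1q (hn : n ≠ 0) (q : ℕ) (h : LieGen n (calF n) (trAB n 0 (q+1))) :
    LieGen n (calF n) (trAB n 1 q) := by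
  refine lie_of_bracket_eq (-(2*((q:ℂ)+1))) (neg_ne_zero.mpr (mul_ne_zero two_ne_zero (Nat.cast_add_one_ne_zero q))) h mem20 ?_
  rw [E4' hn q]
  simp only [map_add, _root_.map_mul, map_neg, map_sub, map_ofNat, _root_.map_one,
    MvPolynomial.C_eq_coe_nat]
  try push_cast
  try ring

lemma memT11s2 (hn : n ≠ 0) : LieGen n (calF n) (trAB n 1 1 * trAB n 2 0) := by
  refine lie_of_bracket_eq (-4) (by norm_num) memT11sq mem20 ?_
  rw [pow_two, pbracket_mul]
  have e6 := E6 hn 1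
  norm_num at e6
  rw [e6]
  simp only [map_add, _root_.map_mul, map_neg, map_sub, map_ofNat, _root_.map_one,
    MvPolynomial.C_eq_coe_nat]
  try push_cast
  try ring

lemma memT11t2 (hn : n ≠ 0) : LieGen n (calF n) (trAB n 1 1 * trAB n 0 2) := by
  refine lie_of_bracket_eq 4 (by norm_num) memT11sq mem02 ?_
  rw [pow_two, pbracket_mul]
  have e6 := E6' hn 1
  norm_num at e6
  rw [e6]
  simp only [map_add, _root_.map_mul, map_neg, map_sub, map_ofNat, _root_.map_one,
    MvPolynomial.C_eq_coe_nat]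
  try push_cast
  try ring

lemma memProdA (hn : n ≠ 0) (p : ℕ) (h : LieGen n (calF n) (trAB n (p+1) 0)) :
    LieGen n (calF n) (trAB n 2 0 * trAB n (p+1) 0) := by
  refine lie_of_bracket_eq (-((p:ℂ)+1)) (neg_ne_zero.mpr (Nat.cast_add_one_ne_zero p)) (memT11s2 hn) h ?_
  rw [pbracket_mul, pbracket_XX, E6 hn p]
  simp only [map_add, _root_.map_mul, map_neg, map_sub, map_ofNat, _root_.map_one,
    MvPolynomial.C_eq_coe_nat]
  try push_cast
  try ring

lemma memProdB (hn : n ≠ 0) (q : ℕ) (h : LieGen n (calF n) (trAB n 0 (q+1))) :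
    LieGen n (calF n) (trAB n 0 2 * trAB n 0 (q+1)) := by
  refine lie_of_bracket_eq ((q:ℂ)+1) (Nat.cast_add_one_ne_zero q) (memT11t2 hn) h ?_
  rw [pbracket_mul, pbracket_YY, E6' hn q]
  simp only [map_add, _root_.map_mul, map_neg, map_sub, map_ofNat, _root_.map_one,
    MvPolynomial.C_eq_coe_nat]
  try push_cast
  try ring

end Memb
section Main
variable {n : ℕ}

lemma C3inv : (C ((3:ℂ)⁻¹) : PolyFun n) * 3 = 1 := by
  rw [show ((3:PolyFun n)) = C (3:ℂ) from (map_ofNat _ 3).symm, ← _root_.map_mul]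
  norm_num

lemma mainA (hn : n ≠ 0) :
    ∀ p, LieGen n (calF n) (trAB n (p+2) 0) ∧ LieGen n (calF n) (trAB n (p+3) 0)
  | 0 => ⟨mem20, mem30⟩
  | (p+1) => by
    obtain ⟨h2, h3⟩ := mainA hn p
    refine ⟨h3, ?_⟩
    have hT : LieGen n (calF n) (trAB n (p+2) 1) := memTp1 hn (p+2) h3
    have hv : LieGen n (calF n) (trAB n 2 0 * trAB n (p+2) 0) := memProdA hn (p+1) h2
    have hu : LieGen n (calF n) (pbracket (trAB n 3 0) (trAB n (p+2) 1)) :=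
      LieGen.bracket mem30 hT
    have key : trAB n (p+4) 0
        = (3⁻¹:ℂ) • pbracket (trAB n 3 0) (trAB n (p+2) 1)
          + ((n:ℂ)⁻¹) • (trAB n 2 0 * trAB n (p+2) 0) := by
      have e := E5 hn (p+2)
      have hpp : p + 2 + 2 = p + 4 := by omega
      rw [hpp] at e
      rw [e, smul_eq_C_mul, smul_eq_C_mul]
      linear_combination (C ((n:ℂ)⁻¹) * (trAB n 2 0 * trAB n (p+2) 0) - trAB n (p+4) 0) *
        (C3inv (n := n))
    rw [show p + 1 + 3 = p + 4 from rfl, key]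
    exact LieGen.add (LieGen.smul _ hu) (LieGen.smul _ hv)

lemma mainB (hn : n ≠ 0) :
    ∀ q, LieGen n (calF n) (trAB n 0 (q+2)) ∧ LieGen n (calF n) (trAB n 0 (q+3))
  | 0 => ⟨mem02, mem03 hn⟩
  | (q+1) => by
    obtain ⟨h2, h3⟩ := mainB hn q
    refine ⟨h3, ?_⟩
    have hT : LieGen n (calF n) (trAB n 1 (q+2)) := memT1q hn (q+2) h3
    have hv : LieGen n (calF n) (trAB n 0 2 * trAB n 0 (q+2)) := memProdB hn (q+1) h2
    have hu : LieGen n (calF n) (pbracket (trAB n 1 (q+2)) (trAB n 0 3)) :=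
      LieGen.bracket hT (mem03 hn)
    have key : trAB n 0 (q+4)
        = (3⁻¹:ℂ) • pbracket (trAB n 1 (q+2)) (trAB n 0 3)
          + ((n:ℂ)⁻¹) • (trAB n 0 2 * trAB n 0 (q+2)) := by
      have e := E5' hn (q+2)
      have hpp : q + 2 + 2 = q + 4 := by omega
      rw [hpp] at e
      rw [e, smul_eq_C_mul, smul_eq_C_mul]
      linear_combination (C ((n:ℂ)⁻¹) * (trAB n 0 2 * trAB n 0 (q+2)) - trAB n 0 (q+4)) *
        (C3inv (n := n))
    rw [show q + 1 + 3 = q + 4 from rfl, key]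
    exact LieGen.add (LieGen.smul _ hu) (LieGen.smul _ hv)

end Main
/-- for all `j, k ≥ 2` there are `g, h ∈ Lie(ℱ)` such that `tr A^j`
agrees with `g` and `tr B^k` agrees with `h` at every point of `Ŝ_n`. -/
theorem stmt_7 (n : ℕ) (hn : 1 ≤ n) (j k : ℕ) (hj : 2 ≤ j) (hk : 2 ≤ k) :
    (∃ g : PolyFun n, LieGen n (calF n) g ∧
      ∀ P ∈ Shat n, evalP P.1 P.2 (trAB n j 0) = evalP P.1 P.2 g) ∧
    (∃ h : PolyFun n, LieGen n (calF n) h ∧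
      ∀ P ∈ Shat n, evalP P.1 P.2 (trAB n 0 k) = evalP P.1 P.2 h) := by
  
  have hn' : n ≠ 0 := by omega
  obtain ⟨a, rfl⟩ : ∃ a, j = a + 2 := ⟨j - 2, by omega⟩
  obtain ⟨b, rfl⟩ : ∃ b, k = b + 2 := ⟨k - 2, by omega⟩
  exact ⟨⟨trAB n (a+2) 0, (mainA hn' a).1, fun P _ => rfl⟩,
    ⟨trAB n 0 (b+2), (mainB hn' b).1, fun P _ => rfl⟩⟩
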